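/- Let M be positive semidefinite and suppose x : [0,∞) → R^r is absolutely continuous with x'(t) = -Mγ(t) for a.e. t, where γ(t) is a generalized sign vector of x(t). Then t ↦ ‖x(t)‖₁ is non-increasing; specifically, at almost every t, d/dt ‖x(t)‖₁ = -γ(t)'Mγ(t) ≤ 0. -/

import Mathlib

open Matrix MeasureTheory

def IsGenSign {r : ℕ} (x q : Fin r → ℝ) : Prop :=
  ∀ k, (0 < x k → q k = 1) ∧ (x k < 0 → q k = -1) ∧ (x k = 0 → |q k| ≤ 1)

section AuxLemmas

open Filter Topology Set Asymptotics

theorem my_ae_hasDerivAt_intervalIntegral {E : Type*} [NormedAddCommGroup E] [NormedSpace ℝ E]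
    [CompleteSpace E] {f : ℝ → E} (hloc : LocallyIntegrable f volume)
    (hInt : ∀ t : ℝ, IntervalIntegrable f volume 0 t) :
    ∀ᵐ t ∂volume, HasDerivAt (fun u => ∫ s in (0:ℝ)..u, f s) (f t) t := by
  filter_upwards [IsUnifLocDoublingMeasure.ae_tendsto_average_norm_sub (μ := volume) hloc 1] with t ht
  have key : Tendsto (fun h : ℝ => ⨍ y in Metric.closedBall t |h|, ‖f y - f t‖)
      (𝓝[≠] (0:ℝ)) (𝓝 0) := by
    refine ht (fun _ : ℝ => t) (fun h => |h|) tendsto_abs_nhdsNE_zero ?_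
    filter_upwards with h
    simpa using abs_nonneg h
  rw [hasDerivAt_iff_isLittleO, isLittleO_iff]
  intro c hc
  have hmap : Tendsto (fun u : ℝ => u - t) (𝓝[≠] t) (𝓝[≠] (0:ℝ)) := by
    apply tendsto_nhdsWithin_of_tendsto_nhds_of_eventually_within
    · have : Tendsto (fun u : ℝ => u - t) (𝓝 t) (𝓝 (t - t)) :=
        (continuous_id.sub continuous_const).tendsto t
      simpa using this.mono_left nhdsWithin_le_nhds
    · filter_upwards [self_mem_nhdsWithin] with u hu
      simpa [sub_eq_zero] using hu
  have hev : ∀ᶠ u in 𝓝[≠] t, ⨍ y in Metric.closedBall t |u - t|, ‖f y - f t‖ < c / 2 :=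
    hmap.eventually (key.eventually_lt_const (by positivity))
  rw [eventually_nhdsWithin_iff] at hev
  filter_upwards [hev] with u hu
  rcases eq_or_ne u t with rfl | hne
  · simp
  · have havg := hu (by simpa using hne)
    -- rewrite the difference of integrals
    have hint_tu : IntervalIntegrable f volume t u := (hInt t).symm.trans (hInt u)
    have h1 : (∫ s in (0:ℝ)..u, f s) - ∫ s in (0:ℝ)..t, f s = ∫ s in t..u, f s :=
      intervalIntegral.integral_interval_sub_left (hInt u) (hInt t)
    have h2 : (∫ s in t..u, f s) - (u - t) • f t = ∫ s in t..u, (f s - f t) := by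
      rw [intervalIntegral.integral_sub hint_tu (intervalIntegrable_const)]
      simp
    have hball : Set.uIoc t u ⊆ Metric.closedBall t |u - t| := by
      intro y hy
      rw [Metric.mem_closedBall, Real.dist_eq, abs_le]
      rcases le_total t u with h | h
      · rw [Set.uIoc_of_le h] at hy
        rw [abs_of_nonneg (by linarith)]
        exact ⟨by linarith [hy.1, hy.2], by linarith [hy.1, hy.2]⟩
      · rw [Set.uIoc_of_ge h] at hy
        rw [abs_of_nonpos (by linarith)]
        exact ⟨by linarith [hy.1, hy.2], by linarith [hy.1, hy.2]⟩
    have habs : 0 < |u - t| := abs_pos.2 (sub_ne_zero.2 hne)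
    have hball_int : IntegrableOn (fun s => ‖f s - f t‖) (Metric.closedBall t |u - t|) volume := by
      refine Integrable.norm ?_
      exact (hloc.integrableOn_isCompact (isCompact_closedBall t _)).sub
        (integrableOn_const (measure_closedBall_lt_top).ne)
    have hvol : (volume (Metric.closedBall t |u - t|)).toReal = 2 * |u - t| := by
      rw [Real.volume_closedBall, ENNReal.toReal_ofReal (by positivity)]
    have h3 : (∫ s in Metric.closedBall t |u - t|, ‖f s - f t‖)
        = (2 * |u - t|) * ⨍ y in Metric.closedBall t |u - t|, ‖f y - f t‖ := by
      rw [setAverage_eq, measureReal_def, hvol, smul_eq_mul]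
      field_simp
    calc ‖(∫ s in (0:ℝ)..u, f s) - (∫ s in (0:ℝ)..t, f s) - (u - t) • f t‖
        = ‖∫ s in t..u, (f s - f t)‖ := by rw [h1, h2]
      _ ≤ ∫ s in Set.uIoc t u, ‖f s - f t‖ := intervalIntegral.norm_integral_le_integral_norm_uIoc
      _ ≤ ∫ s in Metric.closedBall t |u - t|, ‖f s - f t‖ := by
          refine setIntegral_mono_set hball_int ?_ hball.eventuallyLE
          filter_upwards with s using norm_nonneg _
      _ = (2 * |u - t|) * ⨍ y in Metric.closedBall t |u - t|, ‖f y - f t‖ := h3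
      _ ≤ (2 * |u - t|) * (c / 2) := by
          apply mul_le_mul_of_nonneg_left havg.le (by positivity)
      _ = c * ‖u - t‖ := by rw [Real.norm_eq_abs]; ring

theorem my_hasDerivAt_abs {u : ℝ → ℝ} {d q t : ℝ}
    (h : HasDerivAt u d t)
    (h1 : 0 < u t → q = 1) (h2 : u t < 0 → q = -1) (h0 : u t = 0 → d = 0) :
    HasDerivAt (fun s => |u s|) (q * d) t := by
  rcases lt_trichotomy (u t) 0 with hlt | heq | hgt
  · have hev : (fun s => |u s|) =ᶠ[𝓝 t] fun s => -u s := by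
      filter_upwards [h.continuousAt.eventually_lt_const hlt] with s hs
      exact abs_of_neg hs
    rw [h2 hlt, neg_one_mul]
    exact h.neg.congr_of_eventuallyEq hev
  · have hd : d = 0 := h0 heq
    have h' := h
    rw [hd] at h'
    rw [hasDerivAt_iff_isLittleO] at h' ⊢
    have hcong : (fun s => |u s| - |u t| - (s - t) • (q * d)) = fun s => |u s - u t - (s - t) • (0:ℝ)| := by
      funext s
      simp [heq, hd, abs_sub_comm]
    rw [hcong]
    simpa using h'.abs_left
  · have hev : (fun s => |u s|) =ᶠ[𝓝 t] u := by
      filter_upwards [h.continuousAt.eventually_const_lt hgt] with s hs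
      exact abs_of_pos hs
    rw [h1 hgt, one_mul]
    exact h.congr_of_eventuallyEq hev

theorem my_countable_isolated {Z T : Set ℝ}
    (hT : ∀ t ∈ T, t ∈ Z ∧ ∃ a b : ℝ, a < t ∧ t < b ∧ ∀ s ∈ Z ∩ Set.Ioo a b, s = t) :
    T.Countable := by
  have hsub : T ⊆ ⋃ p : ℚ × ℚ,
      {t | t ∈ Z ∧ t ∈ Set.Ioo (p.1 : ℝ) (p.2 : ℝ) ∧ ∀ s ∈ Z ∩ Set.Ioo (p.1 : ℝ) (p.2 : ℝ), s = t} := by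
    intro t ht
    obtain ⟨htZ, a, b, hat, htb, huniq⟩ := hT t ht
    obtain ⟨a', ha'⟩ := exists_rat_btwn hat
    obtain ⟨b', hb'⟩ := exists_rat_btwn htb
    refine Set.mem_iUnion.2 ⟨(a', b'), htZ, ⟨ha'.2, hb'.1⟩, fun s hs => ?_⟩
    exact huniq s ⟨hs.1, lt_trans ha'.1 hs.2.1, lt_trans hs.2.2 hb'.2⟩
  refine Set.Countable.mono hsub (Set.countable_iUnion fun p => ?_)
  refine Set.Subsingleton.countable fun s hs s' hs' => ?_
  have e1 := hs'.2.2 s ⟨hs.1, hs.2.1⟩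
  have e2 := hs.2.2 s' ⟨hs'.1, hs'.2.1⟩
  linarith [e1, e2]

theorem my_antitone_aux {f : ℝ → ℝ} {L a b : ℝ} (hL : 0 ≤ L) (hab : a ≤ b)
    (hlip : ∀ s t, a ≤ s → a ≤ t → |f t - f s| ≤ L * |t - s|)
    {E : Set ℝ} (hE : volume E = 0)
    (hderiv : ∀ t, t ∈ Set.Ico a b → t ∉ E → ∃ d ≤ 0, HasDerivAt f d t) :
    f b ≤ f a := by
  by_contra hcon
  push_neg at hcon
  set c := (f b - f a) / 2 with hcdef
  have hc : 0 < c := by simp [hcdef]; linarith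
  -- choose δ
  set δ : ℝ := min 1 (c / (L + 2 + (b - a))) with hδdef
  have hden : 0 < L + 2 + (b - a) := by linarith
  have hδpos : 0 < δ := lt_min one_pos (by positivity)
  have hδ1 : δ ≤ 1 := min_le_left _ _
  have hδc : δ * (L + 2 + (b - a)) ≤ c := by
    have h2 : δ ≤ c / (L + 2 + (b - a)) := min_le_right _ _
    calc δ * (L + 2 + (b - a)) ≤ (c / (L + 2 + (b - a))) * (L + 2 + (b - a)) :=
          mul_le_mul_of_nonneg_right h2 hden.le
      _ = c := by field_simp
  -- open superset of E
  obtain ⟨U, hEU, hUopen, hUvol⟩ := Set.exists_isOpen_lt_of_lt E (ENNReal.ofReal δ)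
    (by rw [hE]; exact ENNReal.ofReal_pos.2 hδpos)
  have hUfin : ∀ s : Set ℝ, volume (U ∩ s) ≠ ⊤ := fun s =>
    (lt_of_le_of_lt (measure_mono Set.inter_subset_left) (hUvol.trans_le le_top)).ne
  set φ : ℝ → ℝ := fun t => (volume (U ∩ Set.Ioc a t)).toReal with hφdef
  have hφa : φ a = 0 := by simp [hφdef]
  have hφadd : ∀ s t, a ≤ s → s ≤ t → φ t = φ s + (volume (U ∩ Set.Ioc s t)).toReal := by
    intro s t has hst
    have hsplit : U ∩ Set.Ioc a t = (U ∩ Set.Ioc a s) ∪ (U ∩ Set.Ioc s t) := by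
      rw [← Set.inter_union_distrib_left, Set.Ioc_union_Ioc_eq_Ioc has hst]
    have hdisj : Disjoint (U ∩ Set.Ioc a s) (U ∩ Set.Ioc s t) := by
      refine Set.disjoint_left.2 fun y hy1 hy2 => ?_
      exact absurd hy2.2.1 (not_lt.2 hy1.2.2)
    rw [hφdef]
    simp only
    rw [hsplit, measure_union hdisj (hUopen.measurableSet.inter measurableSet_Ioc),
      ENNReal.toReal_add (hUfin _) (hUfin _)]
  have hφmono : ∀ s t, a ≤ s → s ≤ t → φ s ≤ φ t := by
    intro s t has hst
    rw [hφadd s t has hst]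
    exact le_add_of_nonneg_right ENNReal.toReal_nonneg
  have hφlip : ∀ s t, a ≤ s → s ≤ t → φ t - φ s ≤ t - s := by
    intro s t has hst
    rw [hφadd s t has hst]
    have : volume (U ∩ Set.Ioc s t) ≤ volume (Set.Ioc s t) := measure_mono Set.inter_subset_right
    have h2 := ENNReal.toReal_mono (by simp) this
    rw [Real.volume_Ioc, ENNReal.toReal_ofReal (by linarith)] at h2
    linarith
  have hφgrow : ∀ s t, a ≤ s → s ≤ t → Set.Ioc s t ⊆ U → t - s ≤ φ t - φ s := by
    intro s t has hst hsub
    rw [hφadd s t has hst]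
    have : Set.Ioc s t ⊆ U ∩ Set.Ioc s t := fun y hy => ⟨hsub hy, hy⟩
    have h2 := ENNReal.toReal_mono (hUfin _) (measure_mono this)
    rw [Real.volume_Ioc, ENNReal.toReal_ofReal (by linarith)] at h2
    linarith
  -- the set for continuous induction
  set S : Set ℝ := {t | f t - f a ≤ (L + δ) * φ t + δ * (t - a)} with hSdef
  have hcl : IsClosed (S ∩ Set.Icc a b) := by
    have hfc : ContinuousOn f (Set.Icc a b) := by
      refine (LipschitzOnWith.of_dist_le_mul (K := ⟨L, hL⟩) fun s hs y hy => ?_).continuousOn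
      rw [Real.dist_eq, Real.dist_eq]
      exact hlip y s hy.1 hs.1
    have hφc : ContinuousOn φ (Set.Icc a b) := by
      refine (LipschitzOnWith.of_dist_le_mul (K := 1) fun s hs y hy => ?_).continuousOn
      rw [Real.dist_eq, Real.dist_eq, NNReal.coe_one, one_mul, abs_sub_le_iff]
      rcases le_total s y with h | h
      · rw [abs_of_nonpos (by linarith)]
        exact ⟨by linarith [hφmono s y hs.1 h], by linarith [hφlip s y hs.1 h]⟩
      · rw [abs_of_nonneg (by linarith)]
        exact ⟨by linarith [hφlip y s hy.1 h], by linarith [hφmono y s hy.1 h]⟩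
    have : S ∩ Set.Icc a b
        = Set.Icc a b ∩ ((fun t => f t - f a - (L + δ) * φ t - δ * (t - a)) ⁻¹' Set.Iic 0) := by
      ext y
      simp only [Set.mem_inter_iff, Set.mem_setOf_eq, Set.mem_preimage, Set.mem_Iic, hSdef]
      constructor
      · rintro ⟨h1, h2⟩; exact ⟨h2, by linarith⟩
      · rintro ⟨h1, h2⟩; exact ⟨by linarith, h1⟩
    rw [this]
    refine ContinuousOn.preimage_isClosed_of_isClosed ?_ isClosed_Icc isClosed_Iic
    exact ((hfc.sub continuousOn_const).sub ((continuousOn_const.mul hφc))).sub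
      (continuousOn_const.mul (continuousOn_id.sub continuousOn_const))
  have haS : a ∈ S := by simp [hSdef, hφa]
  have hsub : Set.Icc a b ⊆ S := by
    refine hcl.Icc_subset_of_forall_exists_gt haS ?_
    rintro t ⟨htS, hta, htb⟩ y hy
    by_cases htU : t ∈ U
    · -- inside the open set: use Lipschitz bound and growth of φ
      obtain ⟨ε, hεpos, hball⟩ := Metric.isOpen_iff.mp hUopen t htU
      set s : ℝ := min y (min b (t + ε / 2)) with hsdef
      have hts : t < s := by
        apply lt_min hy
        exact lt_min htb (by linarith)
      have hsy : s ≤ y := min_le_left _ _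
      have hsball : Set.Ioc t s ⊆ U := by
        intro z hz
        apply hball
        rw [Metric.mem_ball, Real.dist_eq, abs_of_pos (by linarith [hz.1])]
        have : s ≤ t + ε / 2 := le_trans (min_le_right _ _) (min_le_right _ _)
        linarith [hz.2]
      have hgrow := hφgrow t s hta hts.le hsball
      have hflip : f s - f t ≤ L * (s - t) := by
        have h1 := hlip t s hta (by linarith [hta])
        have habs2 : |s - t| = s - t := abs_of_nonneg (by linarith)
        rw [habs2] at h1
        exact le_trans (le_abs_self _) h1
      refine ⟨s, ?_, hts, hsy⟩
      rw [hSdef, Set.mem_setOf_eq]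
      have hLd : (0:ℝ) ≤ L + δ := by linarith
      have h1 : (L + δ) * (φ t + (s - t)) ≤ (L + δ) * φ s :=
        mul_le_mul_of_nonneg_left (by linarith) hLd
      have htS' : f t - f a ≤ (L + δ) * φ t + δ * (t - a) := htS
      nlinarith [hδpos.le]
    · -- outside: use the derivative
      obtain ⟨d, hd0, hdAt⟩ := hderiv t ⟨hta, htb⟩ (fun h => htU (hEU h))
      rw [hasDerivAt_iff_tendsto_slope] at hdAt
      have hslope : Tendsto (slope f t) (𝓝[>] t) (𝓝 d) :=
        hdAt.mono_left (nhdsWithin_mono t fun z hz => ne_of_gt hz)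
      have hev : ∀ᶠ s in 𝓝[>] t, slope f t s < δ :=
        hslope.eventually_lt_const (lt_of_le_of_lt hd0 hδpos)
      have hIoc : Set.Ioc t y ∈ 𝓝[>] t := Ioc_mem_nhdsGT hy
      obtain ⟨s, hs1, hs2⟩ := (hev.and (eventually_of_mem hIoc fun z hz => hz)).exists
      refine ⟨s, ?_, hs2⟩
      rw [hSdef, Set.mem_setOf_eq]
      have hst : t < s := hs2.1
      have hslope2 : f s - f t < δ * (s - t) := by
        have h2 := hs1
        rw [slope_def_field, div_lt_iff₀ (by linarith : (0:ℝ) < s - t)] at h2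
        linarith
      have hφm := hφmono t s hta hst.le
      have hmul : (L + δ) * φ t ≤ (L + δ) * φ s :=
        mul_le_mul_of_nonneg_left hφm (by linarith)
      have htS' : f t - f a ≤ (L + δ) * φ t + δ * (t - a) := htS
      linarith
  have hbS : b ∈ S := hsub ⟨hab, le_refl b⟩
  have hφb : φ b ≤ δ := by
    have h1 : volume (U ∩ Set.Ioc a b) ≤ ENNReal.ofReal δ :=
      le_trans (measure_mono Set.inter_subset_left) hUvol.le
    have h2 := ENNReal.toReal_mono (by simp) h1
    rwa [ENNReal.toReal_ofReal hδpos.le] at h2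
  have hφb0 : 0 ≤ φ b := ENNReal.toReal_nonneg
  have hbS' : f b - f a ≤ (L + δ) * φ b + δ * (b - a) := hbS
  have hmul2 : (L + δ) * φ b ≤ (L + δ) * δ := mul_le_mul_of_nonneg_left hφb (by linarith)
  nlinarith [mul_le_mul_of_nonneg_left hδ1 hδpos.le]

end AuxLemmas

open Filter Topology Set Asymptotics

/-- Along an absolutely continuous solution of `x' = -Mγ` with `M` PSD and `γ(t)` a
generalized sign vector of `x(t)`, the function `t ↦ ‖x(t)‖₁` is non-increasing on
`[0,∞)`, and at a.e. `t` its derivative equals `-γ(t)'Mγ(t) ≤ 0`. -/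
theorem stmt_10 {r : ℕ} (M : Matrix (Fin r) (Fin r) ℝ) (hM : M.PosSemidef)
    (x γ : ℝ → Fin r → ℝ)
    (hγ : ∀ t, IsGenSign (x t) (γ t))
    (hInt : ∀ t : ℝ, IntervalIntegrable (fun s => -(M.mulVec (γ s))) volume 0 t)
    (hAC : ∀ t ≥ (0:ℝ), x t = x 0 + ∫ s in (0:ℝ)..t, -(M.mulVec (γ s))) :
    AntitoneOn (fun t => ∑ k, |x t k|) (Set.Ici 0) ∧
    ∀ᵐ t ∂(volume.restrict (Set.Ici (0:ℝ))),
      HasDerivAt (fun s => ∑ k, |x s k|) (-(∑ k, γ t k * M.mulVec (γ t) k)) t ∧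
      -(∑ k, γ t k * M.mulVec (γ t) k) ≤ 0 := by
  classical
  set f : ℝ → Fin r → ℝ := fun s => -(M.mulVec (γ s)) with hfdef
  set F : ℝ → ℝ := fun s => ∑ k, |x s k| with hFdef
  set D : ℝ → ℝ := fun t => -(∑ k, γ t k * M.mulVec (γ t) k) with hDdef
  -- bound on γ
  have hγ1 : ∀ t k, |γ t k| ≤ 1 := by
    intro t k
    rcases lt_trichotomy (x t k) 0 with h | h | h
    · rw [(hγ t k).2.1 h]; norm_num
    · exact (hγ t k).2.2 h
    · rw [(hγ t k).1 h]; norm_num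
  -- bound on f
  set C : ℝ := ∑ k, ∑ j, |M k j| with hCdef
  have hC0 : 0 ≤ C := Finset.sum_nonneg fun k _ => Finset.sum_nonneg fun j _ => abs_nonneg _
  have hfb : ∀ s, ‖f s‖ ≤ C := by
    intro s
    rw [pi_norm_le_iff_of_nonneg hC0]
    intro k
    rw [hfdef]
    simp only [Pi.neg_apply, Real.norm_eq_abs, abs_neg]
    calc |M.mulVec (γ s) k| = |∑ j, M k j * γ s j| := by
          simp [Matrix.mulVec, dotProduct]
      _ ≤ ∑ j, |M k j * γ s j| := Finset.abs_sum_le_sum_abs _ _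
      _ ≤ ∑ j, |M k j| := by
          refine Finset.sum_le_sum fun j _ => ?_
          rw [abs_mul]
          exact mul_le_of_le_one_right (abs_nonneg _) (hγ1 s j)
      _ ≤ C := by
          rw [hCdef]
          exact Finset.single_le_sum (f := fun k => ∑ j, |M k j|)
            (fun i _ => Finset.sum_nonneg fun j _ => abs_nonneg _) (Finset.mem_univ k)
  -- local integrability
  have hloc : LocallyIntegrable f volume := by
    rw [locallyIntegrable_iff]
    intro K hK
    obtain ⟨R, hR⟩ := hK.isBounded.subset_closedBall 0
    have h1 : IntervalIntegrable f volume (-(max R 0 + 1)) (max R 0 + 1) :=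
      (hInt (-(max R 0 + 1))).symm.trans (hInt (max R 0 + 1))
    rw [intervalIntegrable_iff_integrableOn_Icc_of_le (by
      have := le_max_right R 0; linarith)] at h1
    refine h1.mono_set (hR.trans ?_)
    intro z hz
    rw [Metric.mem_closedBall, Real.dist_eq, sub_zero] at hz
    have h2 := abs_le.mp (hz.trans (le_max_left R 0))
    exact ⟨by linarith [h2.1], by linarith [h2.2]⟩
  -- difference formula
  have hx_eq : ∀ s t : ℝ, 0 ≤ s → 0 ≤ t → x t - x s = ∫ u in s..t, f u := by
    intro s t hs ht
    rw [hAC t ht, hAC s hs]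
    have h1 := intervalIntegral.integral_interval_sub_left (hInt t) (hInt s)
    rw [← h1]
    abel
  -- Lipschitz of F on [0,∞)
  set L : ℝ := (r : ℝ) * C with hLdef
  have hL0 : 0 ≤ L := mul_nonneg (Nat.cast_nonneg r) hC0
  have hlipF : ∀ s t : ℝ, 0 ≤ s → 0 ≤ t → |F t - F s| ≤ L * |t - s| := by
    intro s t hs ht
    have hxnorm : ‖x t - x s‖ ≤ C * |t - s| := by
      rw [hx_eq s t hs ht]
      exact intervalIntegral.norm_integral_le_of_norm_le_const fun u _ => hfb u
    have hcomp : ∀ k, |x t k - x s k| ≤ C * |t - s| := by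
      intro k
      have := norm_le_pi_norm (x t - x s) k
      rw [Real.norm_eq_abs] at this
      simpa using this.trans hxnorm
    have h1 : |F t - F s| ≤ ∑ k : Fin r, |(|x t k| - |x s k|)| := by
      rw [hFdef]
      simp only
      rw [← Finset.sum_sub_distrib]
      exact Finset.abs_sum_le_sum_abs _ _
    have h2 : ∑ k : Fin r, |(|x t k| - |x s k|)| ≤ ∑ k : Fin r, C * |t - s| := by
      refine Finset.sum_le_sum fun k _ => ?_
      exact le_trans (abs_abs_sub_abs_le_abs_sub _ _) (hcomp k)
    rw [Finset.sum_const, Finset.card_univ, Fintype.card_fin, nsmul_eq_mul] at h2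
    rw [hLdef]
    calc |F t - F s| ≤ (r : ℝ) * (C * |t - s|) := le_trans h1 h2
      _ = (r : ℝ) * C * |t - s| := by ring
  -- a.e. derivative of x
  have hFTC := my_ae_hasDerivAt_intervalIntegral hloc hInt
  have hXD : ∀ᵐ t ∂volume, 0 < t → HasDerivAt x (f t) t := by
    filter_upwards [hFTC] with t ht htpos
    have hev : x =ᶠ[𝓝 t] fun u => x 0 + ∫ s in (0:ℝ)..u, f s := by
      filter_upwards [eventually_gt_nhds htpos] with u hu
      exact hAC u hu.le
    exact ((ht.const_add (x 0)).congr_of_eventuallyEq hev)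
  -- the countable bad set
  set T : Set ℝ := ⋃ k : Fin r, {t | x t k = 0 ∧ f t k ≠ 0 ∧
      HasDerivAt (fun s => x s k) (f t k) t} with hTdef
  have hTcnt : T.Countable := by
    refine Set.countable_iUnion fun k => ?_
    refine my_countable_isolated (Z := {s | x s k = 0}) fun t ht => ?_
    obtain ⟨hz, hne, hD⟩ := ht
    refine ⟨hz, ?_⟩
    rw [hasDerivAt_iff_tendsto_slope] at hD
    have hev : ∀ᶠ s in 𝓝[≠] t, slope (fun s => x s k) t s ≠ 0 := hD.eventually_ne hne
    rw [eventually_nhdsWithin_iff] at hev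
    obtain ⟨a, b, hab, hsub⟩ := mem_nhds_iff_exists_Ioo_subset.mp hev
    refine ⟨a, b, hab.1, hab.2, fun s hs => ?_⟩
    by_contra hst
    have h2 := hsub hs.2 (by simpa using hst)
    rw [slope_def_field, hs.1, hz, sub_zero, zero_div] at h2
    exact h2 rfl
  have hTnull : volume T = 0 := hTcnt.measure_zero _
  -- the main a.e. statement
  have hmain : ∀ᵐ t ∂volume, 0 < t → (HasDerivAt F (D t) t ∧ D t ≤ 0) := by
    filter_upwards [hXD, measure_eq_zero_iff_ae_notMem.mp hTnull] with t hX hT htpos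
    have hXt := hX htpos
    have hXk : ∀ k, HasDerivAt (fun s => x s k) (f t k) t := fun k => hasDerivAt_pi.mp hXt k
    have hzero : ∀ k, x t k = 0 → f t k = 0 := by
      intro k hk
      by_contra hne
      exact hT (Set.mem_iUnion.2 ⟨k, hk, hne, hXk k⟩)
    have habs : ∀ k, HasDerivAt (fun s => |x s k|) (γ t k * f t k) t := fun k =>
      my_hasDerivAt_abs (hXk k) ((hγ t k).1) ((hγ t k).2.1) (hzero k)
    have hsum : HasDerivAt (fun s => ∑ k : Fin r, |x s k|) (∑ k : Fin r, γ t k * f t k) t :=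
      HasDerivAt.fun_sum fun k _ => habs k
    have hDeq : ∑ k : Fin r, γ t k * f t k = D t := by
      rw [hDdef, hfdef]
      simp [mul_neg, Finset.sum_neg_distrib]
    constructor
    · rw [hFdef, ← hDeq]; exact hsum
    · rw [hDdef]
      simp only [neg_nonpos]
      have := hM.dotProduct_mulVec_nonneg (γ t)
      simpa [dotProduct] using this
  constructor
  · -- antitone
    intro a ha b hb hab
    show F b ≤ F a
    set E : Set ℝ := {t | 0 < t ∧ ¬(HasDerivAt F (D t) t ∧ D t ≤ 0)} ∪ {0} with hEdef
    have hEnull : volume E = 0 := by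
      refine measure_union_null ?_ (measure_singleton 0)
      have := ae_iff.mp hmain
      simpa [_root_.not_imp, and_comm] using this
    refine my_antitone_aux hL0 hab (fun s t hs ht => hlipF s t (le_trans ha hs) (le_trans ha ht))
      hEnull fun t ht htE => ?_
    have ht0 : 0 < t := by
      rcases lt_or_eq_of_le (le_trans ha ht.1) with h | h
      · exact h
      · exact absurd (Set.mem_union_right _ (by simp [← h])) htE
    have hP : HasDerivAt F (D t) t ∧ D t ≤ 0 := by
      by_contra hnP
      exact htE (Set.mem_union_left _ ⟨ht0, hnP⟩)
    exact ⟨D t, hP.2, hP.1⟩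
  · -- a.e. derivative
    have h1 : ∀ᵐ t ∂(volume.restrict (Set.Ici (0:ℝ))), 0 < t → (HasDerivAt F (D t) t ∧ D t ≤ 0) :=
      ae_restrict_of_ae hmain
    have h2 : ∀ᵐ t ∂(volume.restrict (Set.Ici (0:ℝ))), t ∈ Set.Ici (0:ℝ) :=
      ae_restrict_mem measurableSet_Ici
    have h3 : ∀ᵐ t ∂(volume.restrict (Set.Ici (0:ℝ))), t ≠ 0 := by
      refine ae_iff.mpr ?_
      have : {t : ℝ | ¬t ≠ 0} = {0} := by ext z; simp
      rw [this]
      exact le_antisymm (le_trans (Measure.restrict_le_self _) (by simp)) zero_le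
    filter_upwards [h1, h2, h3] with t hP hmem hne
    exact hP (lt_of_le_of_ne hmem (Ne.symm hne))
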